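/- For every r ≥ 1 and all natural numbers v, e, f, the number of transitive pairs (σ,τ) ∈ S_r × S_r with cyc(σ) = v, cyc(τ) = e and cyc((στ)⁻¹) = f is a totally symmetric function of (v, e, f); that is, it is unchanged under any permutation of the triple (v, e, f). Consequently the number H_{vefr} of rooted hypermaps with v vertices, e edges, f faces and r darts satisfies H_{vefr} = H_{vfer} = H_{evfr}. -/

import Mathlib

/-- Number of cycles of a permutation, counting fixed points as cycles of length 1. -/
def cyc {r : ℕ} (σ : Equiv.Perm (Fin r)) : ℕ :=
  σ.cycleType.card + (Finset.univ.filter fun x => σ x = x).card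

/-- A pair of permutations is transitive if the subgroup they generate acts
transitively on `Fin r`. -/
def IsTransitivePair {r : ℕ} (σ τ : Equiv.Perm (Fin r)) : Prop :=
  ∀ x y : Fin r, ∃ g ∈ Subgroup.closure ({σ, τ} : Set (Equiv.Perm (Fin r))), g x = y

/-- The number of transitive pairs `(σ, τ) ∈ S_r × S_r` with `cyc σ = v`,
`cyc τ = e` and `cyc ((στ)⁻¹) = f`. -/
noncomputable def transPairCount (r v e f : ℕ) : ℕ :=
  Nat.card {p : Equiv.Perm (Fin r) × Equiv.Perm (Fin r) //
    IsTransitivePair p.1 p.2 ∧ cyc p.1 = v ∧ cyc p.2 = e ∧ cyc (p.1 * p.2)⁻¹ = f}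

/-- The number of rooted hypermaps with `v` vertices, `e` edges, `f` faces and
`r` darts: the number of transitive pairs with the given cycle data, divided by `(r-1)!`. -/
noncomputable def Hcount (r v e f : ℕ) : ℚ :=
  (transPairCount r v e f : ℚ) / (r - 1).factorial

lemma cyc_inv {r : ℕ} (σ : Equiv.Perm (Fin r)) : cyc σ⁻¹ = cyc σ := by
  unfold cyc
  rw [Equiv.Perm.cycleType_inv]
  have h : ∀ x : Fin r, σ⁻¹ x = x ↔ σ x = x := fun x => by
    rw [Equiv.Perm.inv_eq_iff_eq, eq_comm]
  simp only [h]

lemma cyc_conj {r : ℕ} (σ τ : Equiv.Perm (Fin r)) : cyc (τ * σ * τ⁻¹) = cyc σ := by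
  unfold cyc
  rw [Equiv.Perm.cycleType_conj]
  congr 1
  apply Finset.card_bij (fun x _ => τ⁻¹ x)
  · intro x hx
    simp only [Finset.mem_filter, Finset.mem_univ, true_and] at hx ⊢
    have := hx
    simp only [Equiv.Perm.mul_apply] at this
    have h2 : σ (τ⁻¹ x) = τ⁻¹ x := by
      apply τ.injective
      simpa using this
    exact h2
  · intro a _ b _ h
    exact τ⁻¹.injective h
  · intro y hy
    simp only [Finset.mem_filter, Finset.mem_univ, true_and] at hy
    refine ⟨τ y, Finset.mem_filter.mpr ⟨Finset.mem_univ _, by simp [hy]⟩, by simp⟩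

lemma closure_swap {r : ℕ} (σ τ : Equiv.Perm (Fin r)) :
    Subgroup.closure ({τ, σ} : Set (Equiv.Perm (Fin r))) =
      Subgroup.closure ({σ, τ} : Set (Equiv.Perm (Fin r))) := by
  rw [Set.pair_comm]

lemma mem_pair_closure_left {G : Type*} [Group G] (a b : G) :
    a ∈ Subgroup.closure ({a, b} : Set G) :=
  Subgroup.subset_closure (by simp)

lemma mem_pair_closure_right {G : Type*} [Group G] (a b : G) :
    b ∈ Subgroup.closure ({a, b} : Set G) :=
  Subgroup.subset_closure (by simp)

lemma closure_ef {r : ℕ} (σ τ : Equiv.Perm (Fin r)) :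
    Subgroup.closure ({σ⁻¹, σ * τ} : Set (Equiv.Perm (Fin r))) =
      Subgroup.closure ({σ, τ} : Set (Equiv.Perm (Fin r))) := by
  apply le_antisymm
  · rw [Subgroup.closure_le]
    intro x hx
    rcases hx with h | h
    · subst h
      exact inv_mem (mem_pair_closure_left σ τ)
    · simp only [Set.mem_singleton_iff] at h
      subst h
      exact mul_mem (mem_pair_closure_left σ τ) (mem_pair_closure_right σ τ)
  · rw [Subgroup.closure_le]
    intro x hx
    rcases hx with h | h
    · rw [h]
      have := inv_mem (mem_pair_closure_left σ⁻¹ (σ * τ))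
      simpa using this
    · simp only [Set.mem_singleton_iff] at h
      rw [h]
      have : σ⁻¹ * (σ * τ) ∈ Subgroup.closure ({σ⁻¹, σ * τ} : Set (Equiv.Perm (Fin r))) :=
        mul_mem (mem_pair_closure_left _ _) (mem_pair_closure_right _ _)
      simpa [mul_assoc] using this

lemma key_ef {r : ℕ} (a b c : ℕ) (σ τ : Equiv.Perm (Fin r))
    (h : IsTransitivePair σ τ ∧ cyc σ = a ∧ cyc τ = b ∧ cyc (σ * τ)⁻¹ = c) :
    IsTransitivePair σ⁻¹ (σ * τ) ∧ cyc σ⁻¹ = a ∧ cyc (σ * τ) = c ∧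
      cyc (σ⁻¹ * (σ * τ))⁻¹ = b := by
  obtain ⟨ht, hv, he, hf⟩ := h
  refine ⟨?_, ?_, ?_, ?_⟩
  · intro x y
    obtain ⟨g, hg, hgx⟩ := ht x y
    exact ⟨g, by rwa [closure_ef], hgx⟩
  · rwa [cyc_inv]
  · rw [← cyc_inv]; exact hf
  · have h2 : (σ⁻¹ * (σ * τ))⁻¹ = τ⁻¹ := by group
    rw [h2, cyc_inv]; exact he

lemma transPairCount_ef (r v e f : ℕ) :
    transPairCount r v e f = transPairCount r v f e := by
  unfold transPairCount
  apply Nat.card_congr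
  refine ⟨fun p => ⟨(p.1.1⁻¹, p.1.1 * p.1.2), key_ef v e f p.1.1 p.1.2 p.2⟩,
          fun p => ⟨(p.1.1⁻¹, p.1.1 * p.1.2), key_ef v f e p.1.1 p.1.2 p.2⟩, ?_, ?_⟩ <;>
    (rintro ⟨⟨σ, τ⟩, h⟩; ext : 2 <;> simp [mul_assoc])

lemma transPairCount_ve (r v e f : ℕ) :
    transPairCount r v e f = transPairCount r e v f := by
  unfold transPairCount
  apply Nat.card_congr
  have key : ∀ (a b : ℕ) (σ τ : Equiv.Perm (Fin r)),
      (IsTransitivePair σ τ ∧ cyc σ = a ∧ cyc τ = b ∧ cyc (σ * τ)⁻¹ = f) →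
      (IsTransitivePair τ σ ∧ cyc τ = b ∧ cyc σ = a ∧ cyc (τ * σ)⁻¹ = f) := by
    rintro a b σ τ ⟨ht, hv, he, hf⟩
    refine ⟨?_, he, hv, ?_⟩
    · intro x y
      obtain ⟨g, hg, hgx⟩ := ht x y
      exact ⟨g, by rwa [closure_swap], hgx⟩
    · have hconj : (τ * σ)⁻¹ = σ⁻¹ * (σ * τ)⁻¹ * σ⁻¹⁻¹ := by group
      rw [hconj, cyc_conj]
      exact hf
  refine ⟨fun p => ⟨(p.1.2, p.1.1), key v e _ _ p.2⟩,
          fun p => ⟨(p.1.2, p.1.1), key e v _ _ p.2⟩, ?_, ?_⟩ <;>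
    (rintro ⟨⟨σ, τ⟩, h⟩; rfl)

theorem transPairCount_symmetric (r : ℕ) (hr : 1 ≤ r) (v e f : ℕ) :
    (transPairCount r v e f = transPairCount r v f e ∧
      transPairCount r v e f = transPairCount r e v f) ∧
    Hcount r v e f = Hcount r v f e ∧ Hcount r v e f = Hcount r e v f := by
  refine ⟨⟨transPairCount_ef r v e f, transPairCount_ve r v e f⟩, ?_, ?_⟩ <;>
    unfold Hcount
  · rw [transPairCount_ef]
  · rw [transPairCount_ve]
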